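/- Let R be an iterative differential ring and let l ∈ ℕ. Set R_l := ⋂_{j < l} ker(∂^(p^j)). Then R_l is a subring of R, and the family (∂^(k p^l))_{k∈ℕ} restricted to R_l defines an iterative derivation on R_l. -/

import Mathlib

/-- An iterative derivation (in the sense of Hasse–Schmidt) on a commutative ring `R`. -/
structure IterativeDerivation (R : Type*) [CommRing R] where
  d : ℕ → R → R
  d_zero : d 0 = id
  d_add : ∀ k a b, d k (a + b) = d k a + d k b
  d_mul : ∀ k a b, d k (a * b) =
    ∑ ij ∈ Finset.HasAntidiagonal.antidiagonal k, d ij.1 a * d ij.2 b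
  d_comp : ∀ i j a, d j (d i a) = ((i + j).choose i : ℕ) • d (i + j) a

variable {R : Type} [CommRing R] (der : IterativeDerivation R)

lemma ID.map_zero (k : ℕ) : der.d k 0 = 0 := by
  have h := der.d_add k 0 0
  rw [add_zero] at h
  exact (left_eq_add.mp h)

lemma ID.map_neg (k : ℕ) (a : R) : der.d k (-a) = - der.d k a := by
  have h := der.d_add k a (-a)
  rw [add_neg_cancel, ID.map_zero] at h
  linear_combination -h

lemma ID.d_zero_apply (a : R) : der.d 0 a = a := by rw [der.d_zero]; rfl

lemma ID.map_one {k : ℕ} (hk : k ≠ 0) : der.d k 1 = 0 := by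
  induction k using Nat.strong_induction_on with
  | _ k IH =>
  obtain ⟨m, rfl⟩ := Nat.exists_eq_succ_of_ne_zero hk
  have h := der.d_mul (m+1) 1 1
  rw [mul_one, Finset.Nat.sum_antidiagonal_eq_sum_range_succ
    (fun i j => der.d i 1 * der.d j 1)] at h
  rw [Finset.sum_range_succ', Finset.sum_range_succ] at h
  simp only [Nat.add_sub_cancel_left, Nat.sub_zero, Nat.add_sub_cancel, Nat.sub_self] at h
  rw [ID.d_zero_apply] at h
  have hmid : ∀ i ∈ Finset.range m, der.d (i+1) 1 * der.d (m+1-(i+1)) 1 = 0 := by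
    intro i hi
    have hi' := Finset.mem_range.mp hi
    rw [IH (i+1) (by omega) (by omega), zero_mul]
  rw [Finset.sum_eq_zero hmid] at h
  -- h : der.d (m+1) 1 = 0 + der.d (m+1) 1 * 1 + 1 * der.d (m+1) 1
  have h1 : der.d (m+1) 1 = 0 := by linear_combination -h
  simpa using h1

variable (p : ℕ) [Fact p.Prime]

lemma lucas_not_dvd_choose : ∀ (j n : ℕ), p ^ j ∣ n → ¬ p ^ (j+1) ∣ n →
    ¬ p ∣ n.choose (p ^ j) := by
  intro j
  induction j with
  | zero =>
    intro n _ h1 hd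
    exact h1 (by simpa [Nat.choose_one_right] using hd)
  | succ j IH =>
    intro n hdvd hndvd
    have hp : p.Prime := Fact.out
    obtain ⟨m, rfl⟩ : p ∣ n := dvd_trans (dvd_pow_self p j.succ_ne_zero) hdvd
    have hm1 : p ^ j ∣ m := by
      have : p * p ^ j ∣ p * m := by rw [← pow_succ']; exact hdvd
      exact (mul_dvd_mul_iff_left (a := p) (by exact_mod_cast hp.ne_zero)).mp this
    have hm2 : ¬ p ^ (j+1) ∣ m := by
      intro hc
      exact hndvd (by rw [pow_succ']; exact mul_dvd_mul_left p hc)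
    have key := Choose.choose_modEq_choose_mod_mul_choose_div_nat
      (p := p) (n := p * m) (k := p ^ (j+1))
    have e1 : (p * m) % p = 0 := Nat.mul_mod_right p m
    have e2 : p ^ (j+1) % p = 0 := by rw [pow_succ]; exact Nat.mul_mod_left _ _
    have e3 : (p * m) / p = m := Nat.mul_div_cancel_left m hp.pos
    have e4 : p ^ (j+1) / p = p ^ j := by rw [pow_succ]; exact Nat.mul_div_cancel _ hp.pos
    rw [e1, e2, e3, e4, Nat.choose_self, one_mul] at key
    intro hd
    apply IH m hm1 hm2
    exact (Nat.modEq_zero_iff_dvd).mp (key.symm.trans (Nat.modEq_zero_iff_dvd.mpr hd))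

lemma lucas_choose_mul_pow : ∀ (l a b : ℕ),
    (a * p ^ l).choose (b * p ^ l) ≡ a.choose b [MOD p] := by
  intro l
  induction l with
  | zero => intro a b; simp [Nat.ModEq.refl]
  | succ l IH =>
    intro a b
    have hp : p.Prime := Fact.out
    have key := Choose.choose_modEq_choose_mod_mul_choose_div_nat
      (p := p) (n := a * p ^ (l+1)) (k := b * p ^ (l+1))
    have e1 : ∀ c : ℕ, (c * p ^ (l+1)) % p = 0 := by
      intro c; rw [pow_succ, ← mul_assoc]; exact Nat.mul_mod_left _ _
    have e2 : ∀ c : ℕ, (c * p ^ (l+1)) / p = c * p ^ l := by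
      intro c; rw [pow_succ, ← mul_assoc]; exact Nat.mul_div_cancel _ hp.pos
    rw [e1, e1, e2, e2, Nat.choose_self, one_mul] at key
    exact key.trans (IH a b)

lemma nat_unit_cast [CharP R p] {c : ℕ} (hc : ¬ p ∣ c) : ∃ m : ℕ, ((c * m : ℕ) : R) = 1 := by
  have hp : p.Prime := Fact.out
  have hco : Nat.Coprime c p := (hp.coprime_iff_not_dvd.mpr hc).symm
  obtain ⟨m, -, hm⟩ := Nat.exists_mul_mod_eq_one_of_coprime hco hp.one_lt
  refine ⟨m, ?_⟩
  rw [CharP.natCast_eq_natCast_mod R p, hm, Nat.cast_one]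

lemma d_eq_zero_of_not_dvd [CharP R p] (l n : ℕ) (a : R)
    (ha : ∀ j, j < l → der.d (p ^ j) a = 0) (hn : ¬ p ^ l ∣ n) : der.d n a = 0 := by
  have hp : p.Prime := Fact.out
  have hn0 : n ≠ 0 := by rintro rfl; exact hn (dvd_zero _)
  set j := padicValNat p n with hj
  have h1 : p ^ j ∣ n := pow_padicValNat_dvd
  have h2 : ¬ p ^ (j+1) ∣ n := pow_succ_padicValNat_not_dvd hn0
  have hjl : j < l := by
    by_contra hge
    exact hn (dvd_trans (pow_dvd_pow p (le_of_not_gt hge)) h1)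
  have hc : ¬ p ∣ n.choose (p ^ j) := lucas_not_dvd_choose p j n h1 h2
  have hle : p ^ j ≤ n := Nat.le_of_dvd (Nat.pos_of_ne_zero hn0) h1
  have hcomp := der.d_comp (p ^ j) (n - p ^ j) a
  rw [ha j hjl, ID.map_zero, Nat.add_sub_cancel' hle] at hcomp
  have h3 : ((n.choose (p ^ j) : ℕ) : R) * der.d n a = 0 := by
    rw [← nsmul_eq_mul, ← hcomp]
  obtain ⟨m, hm⟩ := nat_unit_cast p (R := R) hc
  calc der.d n a = ((n.choose (p ^ j) * m : ℕ) : R) * der.d n a := by rw [hm, one_mul]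
    _ = (m : R) * (((n.choose (p ^ j) : ℕ) : R) * der.d n a) := by push_cast; ring
    _ = 0 := by rw [h3, mul_zero]

/-- For an iterative differential ring `R` of characteristic `p > 0` and `l ∈ ℕ`,
the set `R_l = ⋂_{j < l} ker D^(p^j)` is a subring of `R`, stable under the maps
`D^(k·p^l)`, and the restricted family `(D^(k·p^l))_k` is an iterative derivation
on `R_l`. -/
theorem higher_constants_subring {R : Type} [CommRing R] (p : ℕ) [Fact p.Prime]
    [CharP R p] (der : IterativeDerivation R) (l : ℕ) :
    ∃ S : Subring R,
      ((S : Set R) = {a : R | ∀ j : ℕ, j < l → der.d (p ^ j) a = 0}) ∧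
      (∀ (k : ℕ) (a : R), a ∈ S → der.d (k * p ^ l) a ∈ S) ∧
      ∃ Dl : IterativeDerivation S,
        ∀ (k : ℕ) (a : S), (Dl.d k a : R) = der.d (k * p ^ l) (a : R) := by
  have hp : p.Prime := Fact.out
  set S : Subring R :=
    { carrier := {a : R | ∀ j : ℕ, j < l → der.d (p ^ j) a = 0}
      zero_mem' := fun j _ => ID.map_zero der _
      one_mem' := fun j _ => ID.map_one der (pow_ne_zero j hp.ne_zero)
      add_mem' := by
        intro a b ha hb j hj
        rw [der.d_add, ha j hj, hb j hj, add_zero]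
      neg_mem' := by
        intro a ha j hj
        rw [ID.map_neg, ha j hj, neg_zero]
      mul_mem' := by
        intro a b ha hb j hj
        rw [der.d_mul]
        apply Finset.sum_eq_zero
        rintro ⟨i, i'⟩ hmem
        have hsum : i + i' = p ^ j := Finset.HasAntidiagonal.mem_antidiagonal.mp hmem
        by_cases hi : i = 0
        · subst hi
          rw [zero_add] at hsum
          subst hsum
          rw [hb j hj, mul_zero]
        · have hnd : ¬ p ^ l ∣ i := by
            intro hd
            have hge : p ^ l ≤ i := Nat.le_of_dvd (Nat.pos_of_ne_zero hi) hd
            have hlt : p ^ j < p ^ l := Nat.pow_lt_pow_right hp.one_lt hj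
            omega
          rw [d_eq_zero_of_not_dvd der p l i a ha hnd, zero_mul] } with hS
  have hmem_iff : ∀ a : R, a ∈ S ↔ ∀ j : ℕ, j < l → der.d (p ^ j) a = 0 := fun a => Iff.rfl
  have hstab : ∀ (k : ℕ) (a : R), a ∈ S → der.d (k * p ^ l) a ∈ S := by
    intro k a ha j hj
    have hcomp := der.d_comp (k * p ^ l) (p ^ j) a
    rw [hcomp]
    have hnd : ¬ p ^ l ∣ k * p ^ l + p ^ j := by
      rw [Nat.dvd_add_right (dvd_mul_left (p ^ l) k)]
      intro hd
      have hge : p ^ l ≤ p ^ j := Nat.le_of_dvd (pow_pos hp.pos j) hd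
      have hlt : p ^ j < p ^ l := Nat.pow_lt_pow_right hp.one_lt hj
      omega
    rw [d_eq_zero_of_not_dvd der p l _ a ha hnd, smul_zero]
  refine ⟨S, rfl, hstab, ?_⟩
  refine ⟨⟨fun k a => ⟨der.d (k * p ^ l) (a : R), hstab k a a.2⟩, ?_, ?_, ?_, ?_⟩,
    fun k a => rfl⟩
  · funext a
    apply Subtype.ext
    show der.d (0 * p ^ l) (a : R) = (a : R)
    rw [zero_mul, ID.d_zero_apply]
  · intro k a b
    apply Subtype.ext
    show der.d (k * p ^ l) ((a : R) + (b : R)) = _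
    rw [der.d_add]
    rfl
  · intro k a b
    apply Subtype.ext
    push_cast
    show der.d (k * p ^ l) ((a : R) * (b : R)) = _
    rw [der.d_mul]
    set F : ℕ × ℕ → R := fun ij => der.d ij.1 (a : R) * der.d ij.2 (b : R) with hF
    have hinj : Function.Injective (fun uv : ℕ × ℕ => (uv.1 * p ^ l, uv.2 * p ^ l)) := by
      intro x y hxy
      have hpl : 0 < p ^ l := pow_pos hp.pos l
      simp only [Prod.mk.injEq, Prod.ext_iff] at hxy ⊢
      exact ⟨Nat.eq_of_mul_eq_mul_right hpl hxy.1, Nat.eq_of_mul_eq_mul_right hpl hxy.2⟩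
    set emb : ℕ × ℕ ↪ ℕ × ℕ := ⟨fun uv => (uv.1 * p ^ l, uv.2 * p ^ l), hinj⟩ with hemb
    have hsub : (Finset.HasAntidiagonal.antidiagonal k).map emb ⊆ Finset.HasAntidiagonal.antidiagonal (k * p ^ l) := by
      intro x hx
      obtain ⟨uv, huv, rfl⟩ := Finset.mem_map.mp hx
      have := Finset.HasAntidiagonal.mem_antidiagonal.mp huv
      apply Finset.HasAntidiagonal.mem_antidiagonal.mpr
      show uv.1 * p ^ l + uv.2 * p ^ l = k * p ^ l
      rw [← add_mul, this]
    have hvan : ∀ x ∈ Finset.HasAntidiagonal.antidiagonal (k * p ^ l),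
        x ∉ (Finset.HasAntidiagonal.antidiagonal k).map emb → F x = 0 := by
      rintro ⟨i, i'⟩ hx hnx
      have hsum : i + i' = k * p ^ l := Finset.HasAntidiagonal.mem_antidiagonal.mp hx
      by_cases hd : p ^ l ∣ i
      · exfalso
        obtain ⟨u, rfl⟩ := hd
        have hpl : 0 < p ^ l := pow_pos hp.pos l
        have hule : u ≤ k := by
          have h1 : p ^ l * u ≤ k * p ^ l := Nat.le.intro hsum
          rw [mul_comm k] at h1
          exact Nat.le_of_mul_le_mul_left h1 hpl
        apply hnx
        apply Finset.mem_map.mpr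
        refine ⟨(u, k - u), Finset.HasAntidiagonal.mem_antidiagonal.mpr (by omega), ?_⟩
        show (u * p ^ l, (k - u) * p ^ l) = (p ^ l * u, i')
        have hcm : p ^ l * u = u * p ^ l := mul_comm _ _
        have hi' : i' = (k - u) * p ^ l := by rw [Nat.sub_mul]; omega
        rw [Prod.mk.injEq]
        exact ⟨mul_comm _ _, hi'.symm⟩
      · rw [hF]
        have := d_eq_zero_of_not_dvd der p l i (a : R) a.2 hd
        simp only [this, zero_mul]
    rw [← Finset.sum_subset hsub hvan, Finset.sum_map]
    rfl
  · intro i j a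
    apply Subtype.ext
    push_cast
    show der.d (j * p ^ l) (der.d (i * p ^ l) (a : R)) = _
    rw [der.d_comp]
    have he : i * p ^ l + j * p ^ l = (i + j) * p ^ l := (add_mul i j _).symm
    rw [he]
    have hcast : ((((i + j) * p ^ l).choose (i * p ^ l) : ℕ) : R)
        = (((i + j).choose i : ℕ) : R) :=
      (CharP.natCast_eq_natCast R p).mpr (lucas_choose_mul_pow p l (i + j) i)
    rw [nsmul_eq_mul, nsmul_eq_mul, hcast]
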